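/- Let d, m ≥ 1, let {b_k^t} (k = 1,…,d, t = 1,…,m) be unit vectors in ℂ^d, and let ρ = (1/(m d)) · Σ_{k,t} |k⟩⟨k| ⊗ |t⟩⟨t| ⊗ |b_k^t⟩⟨b_k^t| be the locking state on ℂ^d ⊗ ℂ^m ⊗ ℂ^d, a space of total dimension m d². Then for every m d² × m d² unitary matrix V, (1/√2)·‖ρ − V ρ V†‖_F ≤ √(2·(1/(m d) − 1/(m d²))); in particular, for m = 2 and d = 2^n this bound equals √(2^n − 1)/2^n ≈ 2^{−n/2}, so the LNU distance of the locking state vanishes exponentially in n. -/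

import Mathlib

open Matrix Kronecker

/-- The classical-correlation-locking state:
ρ = (1/(md)) Σ_{k,t} |k⟩⟨k| ⊗ |t⟩⟨t| ⊗ |b_k^t⟩⟨b_k^t| on ℂ^d ⊗ ℂ^m ⊗ ℂ^d. -/
noncomputable def lockingState (d m : ℕ) (b : Fin d → Fin m → Fin d → ℂ) :
    Matrix (Fin d × Fin m × Fin d) (Fin d × Fin m × Fin d) ℂ :=
  ((m * d : ℕ) : ℂ)⁻¹ • ∑ k : Fin d, ∑ t : Fin m,
    Matrix.single k k (1 : ℂ) ⊗ₖ
      (Matrix.single t t (1 : ℂ) ⊗ₖ Matrix.vecMulVec (b k t) (star (b k t)))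

/-- The Frobenius norm of a complex matrix: `‖A‖_F = √(Tr(AᴴA))`. -/
noncomputable def frobNorm {n : Type*} [Fintype n] (A : Matrix n n ℂ) : ℝ :=
  Real.sqrt ((Aᴴ * A).trace.re)

/-! ### Auxiliary lemmas -/

lemma frobNorm_eq_norm {n : Type*} [Fintype n] (A : Matrix n n ℂ) :
    frobNorm A = @norm _ Matrix.frobeniusSeminormedAddCommGroup.toNorm A := by
  rw [frobNorm, Matrix.frobenius_norm_def, ← Real.sqrt_eq_rpow]
  congr 1
  rw [Matrix.trace]
  simp only [Matrix.diag, Matrix.mul_apply, Matrix.conjTranspose_apply]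
  rw [Complex.re_sum, Finset.sum_comm]
  refine Finset.sum_congr rfl fun i _ => ?_
  rw [Complex.re_sum]
  refine Finset.sum_congr rfl fun j _ => ?_
  rw [show ((2:ℝ)) = ((2:ℕ):ℝ) by norm_num, Real.rpow_natCast]
  rw [Complex.star_def, mul_comm, Complex.mul_conj]
  simp [Complex.normSq_eq_norm_sq]
  norm_cast

lemma frobNorm_add_le {n : Type*} [Fintype n] (A B : Matrix n n ℂ) :
    frobNorm (A + B) ≤ frobNorm A + frobNorm B := by
  letI := Matrix.frobeniusSeminormedAddCommGroup (α := ℂ) (m := n) (n := n)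
  have h := norm_add_le (E := Matrix n n ℂ) A B
  simpa only [frobNorm_eq_norm] using h

lemma frobNorm_neg {n : Type*} [Fintype n] (A : Matrix n n ℂ) :
    frobNorm (-A) = frobNorm A := by
  simp [frobNorm]

lemma frobNorm_unitary_conj {n : Type*} [Fintype n] [DecidableEq n]
    (A V : Matrix n n ℂ) (hV : V ∈ Matrix.unitaryGroup n ℂ) :
    frobNorm (V * A * Vᴴ) = frobNorm A := by
  have h1 : Vᴴ * V = 1 := by
    have := hV.1; rwa [Matrix.star_eq_conjTranspose] at this
  rw [frobNorm, frobNorm]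
  congr 2
  have key : (V * A * Vᴴ)ᴴ * (V * A * Vᴴ) = V * (Aᴴ * A) * Vᴴ := by
    simp only [Matrix.conjTranspose_mul, Matrix.conjTranspose_conjTranspose, Matrix.mul_assoc]
    rw [show Vᴴ * (V * (A * Vᴴ)) = A * Vᴴ by rw [← Matrix.mul_assoc, h1, Matrix.one_mul]]
  rw [key, Matrix.trace_mul_cycle, ← Matrix.mul_assoc, h1, Matrix.one_mul]

lemma lockingState_apply (d m : ℕ) (b : Fin d → Fin m → Fin d → ℂ)
    (k1 k2 : Fin d) (t1 t2 : Fin m) (i j : Fin d) :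
    lockingState d m b (k1, t1, i) (k2, t2, j) =
      ((m * d : ℕ) : ℂ)⁻¹ *
        (if k1 = k2 ∧ t1 = t2 then b k1 t1 i * star (b k1 t1 j) else 0) := by
  simp only [lockingState, Matrix.smul_apply, Matrix.sum_apply, kroneckerMap_apply,
    Matrix.single, Matrix.of_apply, Matrix.vecMulVec_apply, smul_eq_mul, Pi.star_apply]
  congr 1
  rw [Finset.sum_eq_single k1, Finset.sum_eq_single t1]
  · by_cases h1 : k1 = k2 <;> by_cases h2 : t1 = t2 <;> simp [h1, h2]
  · intro t _ ht; simp [ht]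
  · simp
  · intro k _ hk; simp [hk]
  · simp

lemma sum_b_mul (d m : ℕ) (b : Fin d → Fin m → Fin d → ℂ)
    (hb : ∀ k t, ∑ i, star (b k t i) * b k t i = 1) (k : Fin d) (t : Fin m) :
    ∑ i, b k t i * star (b k t i) = 1 := by
  rw [← hb k t]; exact Finset.sum_congr rfl (by intros; ring)

lemma lockingState_conjTranspose (d m : ℕ) (b : Fin d → Fin m → Fin d → ℂ) :
    (lockingState d m b)ᴴ = lockingState d m b := by
  ext ⟨k1, t1, i⟩ ⟨k2, t2, j⟩
  rw [Matrix.conjTranspose_apply, lockingState_apply, lockingState_apply]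
  by_cases h1 : k1 = k2
  · by_cases h2 : t1 = t2
    · subst h1; subst h2
      simp only [and_self, if_true, star_mul', star_star]
      have hc : star (((m * d : ℕ) : ℂ)⁻¹) = ((m * d : ℕ) : ℂ)⁻¹ := by simp
      rw [hc]; ring
    · have hA : ¬(k2 = k1 ∧ t2 = t1) := fun h => h2 h.2.symm
      have hB : ¬(k1 = k2 ∧ t1 = t2) := fun h => h2 h.2
      rw [if_neg hA, if_neg hB, mul_zero, star_zero]
  · have hA : ¬(k2 = k1 ∧ t2 = t1) := fun h => h1 h.1.symm
    have hB : ¬(k1 = k2 ∧ t1 = t2) := fun h => h1 h.1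
    rw [if_neg hA, if_neg hB, mul_zero, star_zero]

lemma trace_lockingState (d m : ℕ) (hd : 1 ≤ d) (hm : 1 ≤ m)
    (b : Fin d → Fin m → Fin d → ℂ)
    (hb : ∀ k t, ∑ i, star (b k t i) * b k t i = 1) :
    (lockingState d m b).trace = 1 := by
  have hd0 : ((d : ℂ)) ≠ 0 := Nat.cast_ne_zero.mpr (by omega)
  have hm0 : ((m : ℂ)) ≠ 0 := Nat.cast_ne_zero.mpr (by omega)
  rw [Matrix.trace]
  simp only [Matrix.diag]
  simp only [Fintype.sum_prod_type]
  simp only [lockingState_apply, and_self, if_true]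
  simp only [← Finset.mul_sum, sum_b_mul d m b hb, mul_one]
  simp only [Finset.sum_const, Finset.card_univ, Fintype.card_fin, nsmul_eq_mul]
  push_cast
  field_simp

lemma trace_sq_lockingState (d m : ℕ) (hd : 1 ≤ d) (hm : 1 ≤ m)
    (b : Fin d → Fin m → Fin d → ℂ)
    (hb : ∀ k t, ∑ i, star (b k t i) * b k t i = 1) :
    ((lockingState d m b) * (lockingState d m b)).trace = ((m * d : ℕ) : ℂ)⁻¹ := by
  have hd0 : ((d : ℂ)) ≠ 0 := Nat.cast_ne_zero.mpr (by omega)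
  have hm0 : ((m : ℂ)) ≠ 0 := Nat.cast_ne_zero.mpr (by omega)
  set c : ℂ := ((m * d : ℕ) : ℂ)⁻¹ with hc
  rw [Matrix.trace]
  simp only [Matrix.diag, Matrix.mul_apply]
  simp only [Fintype.sum_prod_type]
  simp only [lockingState_apply]
  have step : ∀ (k : Fin d) (t : Fin m) (i : Fin d),
      (∑ k' : Fin d, ∑ t' : Fin m, ∑ j : Fin d,
        (c * if k = k' ∧ t = t' then b k t i * star (b k t j) else 0) *
        (c * if k' = k ∧ t' = t then b k' t' j * star (b k' t' i) else 0))
      = c^2 * (b k t i * star (b k t i)) := by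
    intro k t i
    rw [Finset.sum_eq_single k]
    rotate_left
    · intro k' _ hk'
      apply Finset.sum_eq_zero; intro t' _
      apply Finset.sum_eq_zero; intro j _
      simp [Ne.symm hk']
    · simp
    rw [Finset.sum_eq_single t]
    rotate_left
    · intro t' _ ht'
      apply Finset.sum_eq_zero; intro j _
      simp [Ne.symm ht']
    · simp
    simp only [and_self, if_true]
    have : ∀ j, (c * (b k t i * star (b k t j))) * (c * (b k t j * star (b k t i)))
        = c^2 * (b k t i * star (b k t i)) * (b k t j * star (b k t j)) := by intro j; ring
    simp only [this, ← Finset.mul_sum, sum_b_mul d m b hb, mul_one]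
  simp only [← hc, step]
  simp only [← Finset.mul_sum, sum_b_mul d m b hb, mul_one]
  simp only [Finset.sum_const, Finset.card_univ, Fintype.card_fin, nsmul_eq_mul]
  rw [hc]
  push_cast
  field_simp

/-- For every unitary V on ℂ^d ⊗ ℂ^m ⊗ ℂ^d, the LNU distance of the locking state
under V is at most √(2(1/(md) − 1/(md²))); for m = 2 and d = 2ⁿ this equals
√(2ⁿ−1)/2ⁿ ≈ 2^{−n/2}, so it vanishes exponentially in n. -/
theorem lockingState_lnu_distance_bound (d m : ℕ) (hd : 1 ≤ d) (hm : 1 ≤ m)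
    (b : Fin d → Fin m → Fin d → ℂ)
    (hb : ∀ k t, ∑ i, star (b k t i) * b k t i = 1)
    (V : Matrix (Fin d × Fin m × Fin d) (Fin d × Fin m × Fin d) ℂ)
    (hV : V ∈ Matrix.unitaryGroup (Fin d × Fin m × Fin d) ℂ) :
    (1 / Real.sqrt 2) * frobNorm (lockingState d m b - V * lockingState d m b * Vᴴ)
      ≤ Real.sqrt (2 * (1 / (m * d) - 1 / (m * d ^ 2))) := by
  have hd0 : ((d : ℂ)) ≠ 0 := Nat.cast_ne_zero.mpr (by omega)
  have hm0 : ((m : ℂ)) ≠ 0 := Nat.cast_ne_zero.mpr (by omega)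
  set ρ := lockingState d m b with hρ
  set c' : ℂ := ((m * d ^ 2 : ℕ) : ℂ)⁻¹ with hc'
  set X : Matrix (Fin d × Fin m × Fin d) (Fin d × Fin m × Fin d) ℂ :=
    ρ - c' • (1 : Matrix (Fin d × Fin m × Fin d) (Fin d × Fin m × Fin d) ℂ) with hX
  set r : ℝ := 1 / (m * d) - 1 / (m * d ^ 2) with hr
  have hstarc : star c' = c' := by rw [hc']; simp
  have hρH : ρᴴ = ρ := lockingState_conjTranspose d m b
  have hXH : Xᴴ = X := by
    rw [hX, Matrix.conjTranspose_sub, hρH, Matrix.conjTranspose_smul,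
      Matrix.conjTranspose_one, hstarc]
  have hexp : Xᴴ * X = ρ * ρ - c' • ρ - c' • ρ + (c' * c') • 1 := by
    rw [hXH, hX]
    rw [Matrix.sub_mul, Matrix.mul_sub, Matrix.mul_sub]
    simp only [Matrix.mul_smul, Matrix.smul_mul, Matrix.mul_one, Matrix.one_mul, smul_smul]
    abel
  have htr : (Xᴴ * X).trace = (r : ℂ) := by
    simp only [hexp, Matrix.trace_add, Matrix.trace_sub, Matrix.trace_smul,
      Matrix.trace_one, smul_eq_mul]
    rw [hρ, trace_sq_lockingState d m hd hm b hb, trace_lockingState d m hd hm b hb]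
    have hcard : (Fintype.card (Fin d × Fin m × Fin d)) = m * d ^ 2 := by
      simp [Fintype.card_prod]; ring
    rw [hcard]
    have hN : ((m * d ^ 2 : ℕ) : ℂ) ≠ 0 :=
      Nat.cast_ne_zero.mpr (Nat.mul_ne_zero (by omega) (pow_ne_zero 2 (by omega)))
    have hcc : c' * c' * ((m * d ^ 2 : ℕ) : ℂ) = c' := by
      rw [hc', mul_assoc, inv_mul_cancel₀ hN, mul_one]
    rw [hcc, hr, hc']
    push_cast
    ring
  have hXnorm : frobNorm X = Real.sqrt r := by
    rw [frobNorm, htr, Complex.ofReal_re]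
  have hVV : V * Vᴴ = 1 := by
    have := hV.2; rwa [Matrix.star_eq_conjTranspose] at this
  have hconj1 : V * (c' • (1 : Matrix (Fin d × Fin m × Fin d) (Fin d × Fin m × Fin d) ℂ)) * Vᴴ
      = c' • 1 := by
    rw [Matrix.mul_smul, Matrix.mul_one, Matrix.smul_mul, hVV]
  have hdecomp : ρ - V * ρ * Vᴴ = X + -(V * X * Vᴴ) := by
    have h1 : V * X * Vᴴ = V * ρ * Vᴴ - c' • 1 := by
      rw [hX, Matrix.mul_sub, Matrix.sub_mul, hconj1]
    rw [h1, hX]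
    abel
  have hbound : frobNorm (ρ - V * ρ * Vᴴ) ≤ 2 * Real.sqrt r := by
    rw [hdecomp]
    calc frobNorm (X + -(V * X * Vᴴ))
        ≤ frobNorm X + frobNorm (-(V * X * Vᴴ)) := frobNorm_add_le _ _
      _ = frobNorm X + frobNorm (V * X * Vᴴ) := by rw [frobNorm_neg]
      _ = 2 * Real.sqrt r := by rw [frobNorm_unitary_conj X V hV, hXnorm]; ring
  have hsqrt2 : (0:ℝ) < Real.sqrt 2 := Real.sqrt_pos.mpr (by norm_num)
  have final : (1 / Real.sqrt 2) * (2 * Real.sqrt r) = Real.sqrt (2 * r) := by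
    rw [Real.sqrt_mul (by norm_num : (0:ℝ) ≤ 2) r]
    have h2 : Real.sqrt 2 * Real.sqrt 2 = 2 := Real.mul_self_sqrt (by norm_num)
    field_simp
    nlinarith [Real.sqrt_nonneg r]
  calc (1 / Real.sqrt 2) * frobNorm (ρ - V * ρ * Vᴴ)
      ≤ (1 / Real.sqrt 2) * (2 * Real.sqrt r) :=
        mul_le_mul_of_nonneg_left hbound (by positivity)
    _ = Real.sqrt (2 * r) := final
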